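/- (Theorem: IKFAC has first-order accuracy of KFAC) Let S̄_t = (1−β) S̄_{t−1} + β(U_{t−1} + λI) with S̄_0 = K_0^{-T} K_0^{-1}, and let K_t = K_{t−1}(I − (β/2)(K_{t−1}^T U_{t−1} K_{t−1} + λ K_{t−1}^T K_{t−1} − I)), with the same invertible K_0 and the same symmetric matrices U_i in both recursions. Then for every fixed t, K_t K_t^T · S̄_t = I + O(β²), i.e., K_t K_t^T = (S̄_t)^{-1} + O(β²). -/

import Mathlib

open Matrix Finset

attribute [local instance] Matrix.linftyOpNormedAddCommGroup Matrix.linftyOpNormedRing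
  Matrix.linftyOpNormedAlgebra

open Polynomial

namespace IKFACaux
variable {n : ℕ}
noncomputable def evB (β : ℝ) : Matrix (Fin n) (Fin n) ℝ[X] →+* Matrix (Fin n) (Fin n) ℝ :=
  (Polynomial.evalRingHom β).mapMatrix
noncomputable def d0 (A : Matrix (Fin n) (Fin n) ℝ[X]) : Matrix (Fin n) (Fin n) ℝ :=
  A.map fun q => q.coeff 1
lemma evB_apply (β : ℝ) (A : Matrix (Fin n) (Fin n) ℝ[X]) (i j : Fin n) :
    evB β A i j = (A i j).eval β := rfl
lemma evB_map_C (β : ℝ) (A : Matrix (Fin n) (Fin n) ℝ) :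
    evB β (A.map (C : ℝ → ℝ[X])) = A := by
  ext i j; simp [evB_apply, Matrix.map_apply]
lemma evB_transpose (β : ℝ) (A : Matrix (Fin n) (Fin n) ℝ[X]) :
    evB β Aᵀ = (evB β A)ᵀ := by ext i j; rfl
lemma evB_smul (β : ℝ) (c : ℝ[X]) (A : Matrix (Fin n) (Fin n) ℝ[X]) :
    evB β (c • A) = c.eval β • evB β A := by
  ext i j; simp [evB_apply, Matrix.smul_apply]
lemma coeff_one_mul' (p q : ℝ[X]) :
    (p*q).coeff 1 = p.coeff 0 * q.coeff 1 + p.coeff 1 * q.coeff 0 := by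
  rw [Polynomial.coeff_mul, Finset.Nat.sum_antidiagonal_eq_sum_range_succ_mk]
  simp [Finset.sum_range_succ, add_comm]
lemma d0_apply (A : Matrix (Fin n) (Fin n) ℝ[X]) (i j : Fin n) :
    d0 A i j = (A i j).coeff 1 := rfl
lemma d0_mul (A B : Matrix (Fin n) (Fin n) ℝ[X]) :
    d0 (A * B) = d0 A * evB 0 B + evB 0 A * d0 B := by
  ext i j
  simp only [d0_apply, Matrix.add_apply, Matrix.mul_apply, Polynomial.finset_sum_coeff,
    evB_apply, coeff_one_mul', ← Polynomial.coeff_zero_eq_eval_zero]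
  rw [← Finset.sum_add_distrib]
  exact Finset.sum_congr rfl fun k _ => by ring
lemma d0_transpose (A : Matrix (Fin n) (Fin n) ℝ[X]) : d0 Aᵀ = (d0 A)ᵀ := by ext i j; rfl
lemma d0_smul (c : ℝ[X]) (A : Matrix (Fin n) (Fin n) ℝ[X]) :
    d0 (c • A) = c.coeff 0 • d0 A + c.coeff 1 • evB 0 A := by
  ext i j
  simp [d0_apply, Matrix.smul_apply, coeff_one_mul', ← Polynomial.coeff_zero_eq_eval_zero,
    evB_apply, Matrix.add_apply, mul_comm]
lemma d0_one : d0 (1 : Matrix (Fin n) (Fin n) ℝ[X]) = 0 := by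
  ext i j
  simp [d0_apply, Matrix.one_apply, apply_ite (fun q : ℝ[X] => q.coeff 1), Polynomial.coeff_one]
lemma d0_add (A B : Matrix (Fin n) (Fin n) ℝ[X]) : d0 (A + B) = d0 A + d0 B := by
  ext i j; simp [d0_apply, Matrix.add_apply]
lemma d0_sub (A B : Matrix (Fin n) (Fin n) ℝ[X]) : d0 (A - B) = d0 A - d0 B := by
  ext i j; simp [d0_apply, Matrix.sub_apply]
lemma d0_map_C (A : Matrix (Fin n) (Fin n) ℝ) : d0 (A.map (C : ℝ → ℝ[X])) = 0 := by
  ext i j; simp [d0_apply, Matrix.map_apply]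

/-- The heart of the induction step. -/
lemma key_step (u : Matrix (Fin n) (Fin n) ℝ) (hu : uᵀ = u) (lam : ℝ)
    (P S Q : Matrix (Fin n) (Fin n) ℝ[X])
    (hQ : P * Pᵀ * S = 1 + (X : ℝ[X]) ^ 2 • Q) :
    ∃ Q' : Matrix (Fin n) (Fin n) ℝ[X],
      (P * (1 - (C (2⁻¹ : ℝ) * X) • (Pᵀ * (u.map C) * P + (C lam) • (Pᵀ * P) - 1))) *
        (P * (1 - (C (2⁻¹ : ℝ) * X) • (Pᵀ * (u.map C) * P + (C lam) • (Pᵀ * P) - 1)))ᵀ *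
        (((1 : ℝ[X]) - X) • S + (X : ℝ[X]) • ((u.map C) + (C lam) • 1))
      = 1 + (X : ℝ[X]) ^ 2 • Q' := by
  set A : Matrix (Fin n) (Fin n) ℝ[X] :=
    Pᵀ * (u.map C) * P + (C lam) • (Pᵀ * P) - 1 with hA
  set P' : Matrix (Fin n) (Fin n) ℝ[X] := P * (1 - (C (2⁻¹ : ℝ) * X) • A) with hP'
  set S' : Matrix (Fin n) (Fin n) ℝ[X] :=
    ((1 : ℝ[X]) - X) • S + (X : ℝ[X]) • ((u.map C) + (C lam) • 1) with hS'
  have hps : evB 0 P * (evB 0 P)ᵀ * evB 0 S = 1 := by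
    have h := congrArg (evB (n := n) 0) hQ
    rw [_root_.map_mul, _root_.map_mul, evB_transpose, _root_.map_add, (evB 0).map_one, evB_smul] at h
    simpa using h
  have e1 : evB 0 P' = evB 0 P := by
    rw [hP', _root_.map_mul, _root_.map_sub, (evB 0).map_one, evB_smul]
    simp
  have e2 : evB 0 S' = evB 0 S := by
    rw [hS', _root_.map_add, evB_smul, evB_smul]
    simp
  have hev0 : evB 0 (P' * P'ᵀ * S') = 1 := by
    rw [_root_.map_mul, _root_.map_mul, evB_transpose, e1, e2, hps]
  have hd : (d0 P * (evB 0 P)ᵀ + evB 0 P * (d0 P)ᵀ) * evB 0 S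
      + evB 0 P * (evB 0 P)ᵀ * d0 S = 0 := by
    have h := congrArg (d0 (n := n)) hQ
    rw [d0_mul, d0_mul, d0_transpose, evB_transpose, _root_.map_mul, d0_add, d0_one, d0_smul] at h
    simpa [Polynomial.coeff_X_pow, evB_transpose] using h
  have hd0 : d0 (P' * P'ᵀ * S') = 0 := by
    have eA : evB 0 A = (evB 0 P)ᵀ * u * evB 0 P + lam • ((evB 0 P)ᵀ * evB 0 P) - 1 := by
      rw [hA]
      simp only [_root_.map_sub, _root_.map_add, _root_.map_mul, evB_transpose, evB_map_C, evB_smul,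
        _root_.map_one, Polynomial.eval_C]
    have dP' : d0 P' = d0 P - (2⁻¹:ℝ) • (evB 0 P * evB 0 A) := by
      rw [hP', d0_mul, d0_sub, d0_one, d0_smul]
      simp only [_root_.map_sub, _root_.map_one, evB_smul, Polynomial.eval_mul, Polynomial.eval_C,
        Polynomial.eval_X, mul_zero, zero_smul, sub_zero, mul_one,
        Polynomial.coeff_C_mul, Polynomial.coeff_X_zero, Polynomial.coeff_X_one,
        zero_sub, mul_neg, mul_smul_comm, zero_add]
      abel
    have dS' : d0 S' = d0 S - evB 0 S + (u + lam • 1) := by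
      rw [hS', d0_add, d0_smul, d0_smul]
      simp only [Polynomial.coeff_sub, Polynomial.coeff_one, Polynomial.coeff_X_zero,
        Polynomial.coeff_X_one, _root_.map_add, evB_smul, Polynomial.eval_C, evB_map_C,
        _root_.map_one, one_smul, neg_smul, zero_smul, zero_add, add_zero]
      norm_num
      abel
    rw [d0_mul, d0_mul, d0_transpose, evB_transpose, e1, e2, dP', dS',
      _root_.map_mul, evB_transpose, e1, eA]
    have ha : ((evB 0 P)ᵀ * u * evB 0 P + lam • ((evB 0 P)ᵀ * evB 0 P) - 1)ᵀ
        = (evB 0 P)ᵀ * u * evB 0 P + lam • ((evB 0 P)ᵀ * evB 0 P) - 1 := by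
      simp [Matrix.transpose_sub, Matrix.transpose_add, Matrix.transpose_smul,
        Matrix.transpose_mul, Matrix.transpose_one, Matrix.transpose_transpose, hu,
        Matrix.mul_assoc]
    rw [Matrix.transpose_sub, Matrix.transpose_smul, Matrix.transpose_mul, ha]
    have h1 : evB 0 P * ((evB 0 P)ᵀ * evB 0 S) = 1 := by
      rw [← Matrix.mul_assoc]; exact hps
    have hd2 := hd
    simp only [add_mul, Matrix.mul_assoc] at hd2
    simp only [sub_mul, add_mul, mul_sub, mul_add, smul_mul_assoc, mul_smul_comm,
      Matrix.mul_assoc, Matrix.mul_one, Matrix.one_mul, mul_one, one_mul, h1]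
    rw [eq_neg_of_add_eq_zero_right hd2]
    module
  have hdvd : ∀ i j, (X : ℝ[X]) ^ 2 ∣ (P' * P'ᵀ * S' - 1) i j := by
    intro i j
    rw [Polynomial.X_pow_dvd_iff]
    intro d hd
    interval_cases d
    · rw [Polynomial.coeff_zero_eq_eval_zero]
      have : evB 0 (P' * P'ᵀ * S' - 1) = 0 := by rw [_root_.map_sub, hev0, (evB 0).map_one, sub_self]
      have h2 := congrFun (congrFun this i) j
      simpa [evB_apply] using h2
    · have : d0 (P' * P'ᵀ * S' - 1) = 0 := by rw [d0_sub, hd0, d0_one, sub_self]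
      have h2 := congrFun (congrFun this i) j
      simpa [d0_apply] using h2
  refine ⟨Matrix.of fun i j => (P' * P'ᵀ * S' - 1) i j /ₘ (X ^ 2), ?_⟩
  refine Matrix.ext fun i j => ?_
  have hmod : (P' * P'ᵀ * S' - 1) i j %ₘ (X ^ 2) = 0 :=
    (Polynomial.modByMonic_eq_zero_iff_dvd (Polynomial.monic_X_pow 2)).mpr (hdvd i j)
  have h4 := Polynomial.modByMonic_add_div ((P' * P'ᵀ * S' - 1) i j) (X ^ 2)
  rw [hmod, zero_add] at h4
  have h5 : (P' * P'ᵀ * S') i j = (1 : Matrix (Fin n) (Fin n) ℝ[X]) i j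
      + X ^ 2 * ((P' * P'ᵀ * S' - 1) i j /ₘ X ^ 2) := by
    rw [h4, Matrix.sub_apply]; ring
  simpa [Matrix.add_apply, Matrix.smul_apply, smul_eq_mul] using h5

lemma key_ind (K₀ : Matrix (Fin n) (Fin n) ℝ) (hK₀ : IsUnit K₀.det)
    (U : ℕ → Matrix (Fin n) (Fin n) ℝ) (hUsym : ∀ i, (U i)ᵀ = U i) (lam : ℝ)
    (Sbar K : ℝ → ℕ → Matrix (Fin n) (Fin n) ℝ)
    (hS0 : ∀ β, Sbar β 0 = (K₀⁻¹)ᵀ * K₀⁻¹)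
    (hSrec : ∀ β t, Sbar β (t + 1) = (1 - β) • Sbar β t + β • (U t + lam • 1))
    (hK0 : ∀ β, K β 0 = K₀)
    (hKrec : ∀ β t, K β (t + 1) = K β t * (1 - (β / 2) •
        ((K β t)ᵀ * U t * K β t + lam • ((K β t)ᵀ * K β t) - 1))) :
    ∀ t, ∃ P S Q : Matrix (Fin n) (Fin n) ℝ[X],
      (∀ β, K β t = evB β P) ∧ (∀ β, Sbar β t = evB β S) ∧
      P * Pᵀ * S = 1 + (X : ℝ[X]) ^ 2 • Q := by
  intro t
  induction t with
  | zero =>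
    refine ⟨K₀.map C, ((K₀⁻¹)ᵀ * K₀⁻¹).map C, 0, fun β => by rw [hK0, evB_map_C],
      fun β => by rw [hS0, evB_map_C], ?_⟩
    have h4 : K₀ * K₀ᵀ * ((K₀⁻¹)ᵀ * K₀⁻¹) = 1 := by
      rw [Matrix.mul_assoc, ← Matrix.mul_assoc (K₀ᵀ), ← Matrix.transpose_mul,
        Matrix.nonsing_inv_mul _ hK₀, Matrix.transpose_one, Matrix.one_mul,
        Matrix.mul_nonsing_inv _ hK₀]
    have h5 : (K₀.map C) * (K₀.map C)ᵀ * (((K₀⁻¹)ᵀ * K₀⁻¹).map C)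
        = (K₀ * K₀ᵀ * ((K₀⁻¹)ᵀ * K₀⁻¹)).map (C : ℝ → ℝ[X]) := by
      rw [← Matrix.transpose_map, ← Matrix.map_mul, ← Matrix.map_mul]
    rw [h5, h4]
    simp
  | succ t ih =>
    obtain ⟨P, S, Q, hP, hS, hQ⟩ := ih
    obtain ⟨Q', hQ'⟩ := key_step (U t) (hUsym t) lam P S Q hQ
    refine ⟨P * (1 - (C (2⁻¹:ℝ) * X) • (Pᵀ * ((U t).map C) * P + (C lam) • (Pᵀ * P) - 1)),
      ((1:ℝ[X]) - X) • S + (X:ℝ[X]) • (((U t).map C) + (C lam) • 1), Q', ?_, ?_, hQ'⟩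
    · intro β
      rw [hKrec, hP β, show (β/2 : ℝ) = 2⁻¹ * β by ring]
      rw [_root_.map_mul, _root_.map_sub, (evB β).map_one, evB_smul, _root_.map_sub,
        _root_.map_add, _root_.map_mul, _root_.map_mul, evB_transpose, evB_map_C,
        evB_smul, _root_.map_mul, evB_transpose, (evB β).map_one]
      simp [Polynomial.eval_mul, Polynomial.eval_C, Polynomial.eval_X]
    · intro β
      rw [hSrec, hS β]
      rw [_root_.map_add, evB_smul, evB_smul, _root_.map_add, evB_map_C, evB_smul,
        (evB β).map_one]
      simp

end IKFACaux

open IKFACaux in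
/-- IKFAC has first-order accuracy of KFAC:
`K_t K_tᵀ · S̄_t = I + O(β²)` for every fixed `t`. -/
theorem ikfac_first_order_accuracy_of_kfac (n : ℕ) (K₀ : Matrix (Fin n) (Fin n) ℝ)
    (hK₀ : IsUnit K₀.det)
    (U : ℕ → Matrix (Fin n) (Fin n) ℝ) (hUsym : ∀ i, (U i)ᵀ = U i)
    (hUpsd : ∀ i, (U i).PosSemidef) (lam : ℝ) (hlam : 0 < lam)
    (Sbar : ℝ → ℕ → Matrix (Fin n) (Fin n) ℝ)
    (hS0 : ∀ β, Sbar β 0 = (K₀⁻¹)ᵀ * K₀⁻¹)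
    (hSrec : ∀ β t, Sbar β (t + 1) = (1 - β) • Sbar β t + β • (U t + lam • 1))
    (K : ℝ → ℕ → Matrix (Fin n) (Fin n) ℝ)
    (hK0 : ∀ β, K β 0 = K₀)
    (hKrec : ∀ β t, K β (t + 1) =
      K β t * (1 - (β / 2) •
        ((K β t)ᵀ * U t * K β t + lam • ((K β t)ᵀ * K β t) - 1))) :
    ∀ t : ℕ, ∃ C : ℝ, ∃ δ > (0 : ℝ), ∀ β : ℝ, 0 < β → β < 1 → |β| < δ →
      ‖K β t * (K β t)ᵀ * Sbar β t - 1‖ ≤ C * β ^ 2 := by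
  intro t
  obtain ⟨P, S, Q, hP, hS, hQ⟩ :=
    key_ind K₀ hK₀ U hUsym lam Sbar K hS0 hSrec hK0 hKrec t
  set d : ℕ := ((Finset.univ : Finset (Fin n × Fin n)).sup
    fun ij => (Q ij.1 ij.2).natDegree) + 1 with hd
  refine ⟨∑ k ∈ Finset.range d, ‖Q.map (fun q => q.coeff k)‖, 1, one_pos,
    fun β hβ0 hβ1 hβδ => ?_⟩
  have hval : K β t * (K β t)ᵀ * Sbar β t - 1 = β ^ 2 • evB β Q := by
    rw [hP β, hS β, ← evB_transpose, ← _root_.map_mul, ← _root_.map_mul, hQ,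
      _root_.map_add, (evB β).map_one, evB_smul]
    simp
  have hdeg : ∀ i j : Fin n, (Q i j).natDegree < d := by
    intro i j
    have := Finset.le_sup (f := fun ij : Fin n × Fin n => (Q ij.1 ij.2).natDegree)
      (Finset.mem_univ (i, j))
    have h2 : (Q i j).natDegree ≤ ((Finset.univ : Finset (Fin n × Fin n)).sup
        fun ij => (Q ij.1 ij.2).natDegree) := by simpa using this
    omega
  have hsum : evB β Q = ∑ k ∈ Finset.range d, β ^ k • Q.map (fun q => q.coeff k) := by
    refine Matrix.ext fun i j => ?_
    rw [evB_apply, Polynomial.eval_eq_sum_range' (hdeg i j)]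
    simp [Matrix.sum_apply, Matrix.smul_apply, Matrix.map_apply, mul_comm]
  have hb : ‖evB β Q‖ ≤ ∑ k ∈ Finset.range d, ‖Q.map (fun q => q.coeff k)‖ := by
    rw [hsum]
    refine (norm_sum_le _ _).trans (Finset.sum_le_sum fun k _ => ?_)
    rw [norm_smul]
    have h1 : ‖β ^ k‖ ≤ 1 := by
      rw [Real.norm_eq_abs, abs_pow]
      exact pow_le_one₀ (abs_nonneg β) (le_of_lt (by rwa [abs_of_pos hβ0]))
    calc ‖β ^ k‖ * ‖Q.map (fun q => q.coeff k)‖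
        ≤ 1 * ‖Q.map (fun q => q.coeff k)‖ :=
          mul_le_mul_of_nonneg_right h1 (norm_nonneg _)
      _ = _ := one_mul _
  rw [hval, norm_smul, Real.norm_eq_abs, abs_pow, abs_of_pos hβ0, mul_comm]
  exact mul_le_mul_of_nonneg_right hb (by positivity)
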